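/- For any function u of class C^{2l+1} on [0,L] with l a positive integer, sum_{j=1}^{l} (-1)^{j+1} ∫_0^L D^{2j+1}u(x)·x·u(x) dx = sum_{i=0}^{l-1} [x·D^i u · (sum_{k=1}^{l-i} (-1)^{k+1} D^{2k+i}u)]_0^L + sum_{i=0}^{l-1} (1+i) [D^i u · (sum_{k=1}^{l-i} (-1)^{k} D^{2k+i-1}u)]_0^L − (x/2) sum_{j=1}^{l} [(D^j u)^2]_0^L + sum_{j=1}^{l} ((2j+1)/2) ∫_0^L (D^j u)^2 dx. -/

import Mathlib

open scoped BigOperators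

noncomputable def D (L : ℝ) (u : ℝ → ℝ) (i : ℕ) (x : ℝ) : ℝ :=
  iteratedDerivWithin i u (Set.Icc 0 L) x

open intervalIntegral Set

lemma my_ibp {a b : ℝ} (hab : a ≤ b) {f g f' g' : ℝ → ℝ}
    (hf : ∀ x ∈ Set.Icc a b, HasDerivWithinAt f (f' x) (Set.Icc a b) x)
    (hg : ∀ x ∈ Set.Icc a b, HasDerivWithinAt g (g' x) (Set.Icc a b) x)
    (hf' : ContinuousOn f' (Set.Icc a b)) (hg' : ContinuousOn g' (Set.Icc a b)) :
    ∫ x in a..b, f' x * g x = f b * g b - f a * g a - ∫ x in a..b, f x * g' x := by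
  have hfc : ContinuousOn f (Set.Icc a b) := fun x hx => (hf x hx).continuousWithinAt
  have hgc : ContinuousOn g (Set.Icc a b) := fun x hx => (hg x hx).continuousWithinAt
  have huIcc : Set.uIcc a b = Set.Icc a b := Set.uIcc_of_le hab
  have int1 : IntervalIntegrable (fun x => f' x * g x) MeasureTheory.volume a b := by
    apply ContinuousOn.intervalIntegrable; rw [huIcc]; exact hf'.mul hgc
  have int2 : IntervalIntegrable (fun x => f x * g' x) MeasureTheory.volume a b := by
    apply ContinuousOn.intervalIntegrable; rw [huIcc]; exact hfc.mul hg'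
  have h1 : ∫ x in a..b, (f' x * g x + f x * g' x) = f b * g b - f a * g a := by
    apply intervalIntegral.integral_eq_sub_of_hasDeriv_right_of_le hab (hfc.mul hgc)
    · intro x hx
      have hmem : Set.Icc a b ∈ nhds x := Icc_mem_nhds hx.1 hx.2
      have hx' : x ∈ Set.Icc a b := Set.mem_Icc_of_Ioo hx
      exact (((hf x hx').hasDerivAt hmem).mul ((hg x hx').hasDerivAt hmem)).hasDerivWithinAt
    · exact int1.add int2
  rw [intervalIntegral.integral_add int1 int2] at h1
  linarith

lemma cont_DD {L : ℝ} (hL : 0 < L) {f : ℝ → ℝ} {N : ℕ}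
    (hf : ContDiffOn ℝ (N : ℕ∞) f (Set.Icc 0 L)) {i : ℕ} (hi : i ≤ N) :
    ContinuousOn (iteratedDerivWithin i f (Set.Icc 0 L)) (Set.Icc 0 L) :=
  hf.continuousOn_iteratedDerivWithin (by exact_mod_cast hi) (uniqueDiffOn_Icc hL)

lemma hasDeriv_DD {L : ℝ} (hL : 0 < L) {f : ℝ → ℝ} {N : ℕ}
    (hf : ContDiffOn ℝ (N : ℕ∞) f (Set.Icc 0 L)) {i : ℕ} (hi : i < N)
    {x : ℝ} (hx : x ∈ Set.Icc 0 L) :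
    HasDerivWithinAt (iteratedDerivWithin i f (Set.Icc 0 L))
      (iteratedDerivWithin (i+1) f (Set.Icc 0 L) x) (Set.Icc 0 L) x := by
  have hs := uniqueDiffOn_Icc hL
  have hdiff : DifferentiableWithinAt ℝ (iteratedDerivWithin i f (Set.Icc 0 L)) (Set.Icc 0 L) x :=
    hf.differentiableOn_iteratedDerivWithin (by exact_mod_cast hi) hs x hx
  have h := hdiff.hasDerivWithinAt
  rwa [iteratedDerivWithin_succ]

lemma chain_ibp {L : ℝ} (hL : 0 < L) {f g : ℝ → ℝ} {N : ℕ}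
    (hf : ContDiffOn ℝ (N : ℕ∞) f (Set.Icc 0 L))
    (hg : ContDiffOn ℝ (N : ℕ∞) g (Set.Icc 0 L)) {n : ℕ} (hn : n ≤ N) :
    ∀ k : ℕ, k ≤ n →
    ∫ x in (0:ℝ)..L, f x * iteratedDerivWithin n g (Set.Icc 0 L) x
      = (∑ i ∈ Finset.range k, (-1:ℝ)^i *
          (iteratedDerivWithin i f (Set.Icc 0 L) L * iteratedDerivWithin (n-1-i) g (Set.Icc 0 L) L
           - iteratedDerivWithin i f (Set.Icc 0 L) 0 *
             iteratedDerivWithin (n-1-i) g (Set.Icc 0 L) 0))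
      + (-1:ℝ)^k * ∫ x in (0:ℝ)..L,
          iteratedDerivWithin k f (Set.Icc 0 L) x * iteratedDerivWithin (n-k) g (Set.Icc 0 L) x := by
  intro k
  induction k with
  | zero => intro _; simp
  | succ k IH =>
    intro hk1
    have hk : k ≤ n := by omega
    rw [IH hk]
    have key : ∫ x in (0:ℝ)..L,
        iteratedDerivWithin k f (Set.Icc 0 L) x * iteratedDerivWithin (n-k) g (Set.Icc 0 L) x
        = (iteratedDerivWithin k f (Set.Icc 0 L) L * iteratedDerivWithin (n-1-k) g (Set.Icc 0 L) L
           - iteratedDerivWithin k f (Set.Icc 0 L) 0 * iteratedDerivWithin (n-1-k) g (Set.Icc 0 L) 0)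
          - ∫ x in (0:ℝ)..L, iteratedDerivWithin (k+1) f (Set.Icc 0 L) x *
              iteratedDerivWithin (n-(k+1)) g (Set.Icc 0 L) x := by
      have hnk : n - k = (n - 1 - k) + 1 := by omega
      have h := my_ibp (le_of_lt hL)
        (f := iteratedDerivWithin (n-1-k) g (Set.Icc 0 L))
        (f' := iteratedDerivWithin (n-k) g (Set.Icc 0 L))
        (g := iteratedDerivWithin k f (Set.Icc 0 L))
        (g' := iteratedDerivWithin (k+1) f (Set.Icc 0 L))
        (fun x hx => by rw [hnk]; exact hasDeriv_DD hL hg (by omega) hx)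
        (fun x hx => hasDeriv_DD hL hf (by omega) hx)
        (cont_DD hL hg (by omega)) (cont_DD hL hf (by omega))
      have e1 : ∀ x : ℝ, iteratedDerivWithin k f (Set.Icc 0 L) x *
          iteratedDerivWithin (n-k) g (Set.Icc 0 L) x
          = iteratedDerivWithin (n-k) g (Set.Icc 0 L) x * iteratedDerivWithin k f (Set.Icc 0 L) x :=
        fun x => mul_comm _ _
      have e2 : ∀ x : ℝ, iteratedDerivWithin (k+1) f (Set.Icc 0 L) x *
          iteratedDerivWithin (n-(k+1)) g (Set.Icc 0 L) x
          = iteratedDerivWithin (n-1-k) g (Set.Icc 0 L) x *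
            iteratedDerivWithin (k+1) f (Set.Icc 0 L) x := by
        intro x; rw [show n - (k+1) = n - 1 - k by omega]; exact mul_comm _ _
      simp only [e1, e2]
      rw [h]; ring
    rw [key, Finset.sum_range_succ]
    ring

lemma contDiff_xu {L : ℝ} {u : ℝ → ℝ} {N : ℕ}
    (hu : ContDiffOn ℝ (N : ℕ∞) u (Set.Icc 0 L)) :
    ContDiffOn ℝ (N : ℕ∞) (fun y => y * u y) (Set.Icc 0 L) :=
  (contDiffOn_id).mul hu

lemma leibniz_xu {L : ℝ} (hL : 0 < L) {u : ℝ → ℝ} {N : ℕ}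
    (hu : ContDiffOn ℝ (N : ℕ∞) u (Set.Icc 0 L)) :
    ∀ i : ℕ, i ≤ N → ∀ x ∈ Set.Icc 0 L,
    iteratedDerivWithin i (fun y => y * u y) (Set.Icc 0 L) x
      = x * iteratedDerivWithin i u (Set.Icc 0 L) x
        + i * iteratedDerivWithin (i-1) u (Set.Icc 0 L) x := by
  have hs := uniqueDiffOn_Icc hL
  intro i
  induction i with
  | zero => intro _ x hx; simp
  | succ i IH =>
    intro hi x hx
    rw [iteratedDerivWithin_succ]
    have hcongr : derivWithin (iteratedDerivWithin i (fun y => y * u y) (Set.Icc 0 L))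
        (Set.Icc 0 L) x
        = derivWithin (fun y => y * iteratedDerivWithin i u (Set.Icc 0 L) y
            + i * iteratedDerivWithin (i-1) u (Set.Icc 0 L) y) (Set.Icc 0 L) x := by
      apply derivWithin_congr
      · intro y hy; exact IH (by omega) y hy
      · exact IH (by omega) x hx
    rw [hcongr]
    have h1 : HasDerivWithinAt (fun y => y * iteratedDerivWithin i u (Set.Icc 0 L) y)
        (1 * iteratedDerivWithin i u (Set.Icc 0 L) x
         + x * iteratedDerivWithin (i+1) u (Set.Icc 0 L) x) (Set.Icc 0 L) x := by
      exact (hasDerivWithinAt_id x _).mul (hasDeriv_DD hL hu (by omega) hx)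
    rcases Nat.eq_zero_or_pos i with hi0 | hipos
    · subst hi0
      have h2 : HasDerivWithinAt (fun y : ℝ => (0:ℕ) * iteratedDerivWithin (0-1) u (Set.Icc 0 L) y)
          0 (Set.Icc 0 L) x := by
        simp only [Nat.cast_zero, zero_mul]
        exact hasDerivWithinAt_const x _ 0
      have h3 := (h1.add h2).derivWithin (hs x hx)
      simp only [Pi.add_def, Nat.cast_zero, zero_mul, add_zero] at h3 ⊢
      rw [h3]
      push_cast
      ring
    · obtain ⟨m, rfl⟩ : ∃ m, i = m + 1 := ⟨i - 1, by omega⟩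
      have h2 : HasDerivWithinAt
          (fun y : ℝ => ((m+1 : ℕ) : ℝ) * iteratedDerivWithin (m+1-1) u (Set.Icc 0 L) y)
          (((m+1 : ℕ) : ℝ) * iteratedDerivWithin (m+1) u (Set.Icc 0 L) x) (Set.Icc 0 L) x := by
        simp only [Nat.add_sub_cancel]
        exact (hasDeriv_DD hL hu (by omega) hx).const_mul _
      have h3 := (h1.add h2).derivWithin (hs x hx)
      simp only [Pi.add_def] at h3
      rw [h3]
      simp only [Nat.add_sub_cancel]
      push_cast
      ring

lemma pair1 (c : ℕ → ℝ) (j : ℕ) :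
    ∑ i ∈ Finset.range (2*j+1), (-1:ℝ)^i * (c i * c (2*j - i))
      = 2 * ∑ i ∈ Finset.range j, (-1:ℝ)^i * (c i * c (2*j - i)) + (-1:ℝ)^j * (c j)^2 := by
  rw [show 2*j+1 = (j+1) + j by ring, Finset.sum_range_add, Finset.sum_range_succ]
  have hrefl : ∑ i ∈ Finset.range j, (-1:ℝ)^(j+1+i) * (c (j+1+i) * c (2*j - (j+1+i)))
      = ∑ i ∈ Finset.range j, (-1:ℝ)^i * (c i * c (2*j - i)) := by
    rw [← Finset.sum_range_reflect (fun i => (-1:ℝ)^(j+1+i) * (c (j+1+i) * c (2*j - (j+1+i)))) j]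
    apply Finset.sum_congr rfl
    intro i hi
    have hij : i < j := Finset.mem_range.mp hi
    rw [show j+1+(j-1-i) = 2*j - i by omega, show 2*j - (2*j - i) = i by omega]
    have hsign : ((-1:ℝ))^(2*j - i) = (-1)^i := by
      rw [show 2*j - i = i + 2*(j-i) by omega, pow_add, pow_mul]
      simp
    rw [hsign]
    ring
  rw [hrefl, show 2*j - j = j by omega]
  ring

lemma pair2 (c : ℕ → ℝ) (j : ℕ) :
    ∑ i ∈ Finset.range (2*j+1), (-1:ℝ)^i * (i:ℝ) * (c (i-1) * c (2*j - i))
      = ∑ i ∈ Finset.range j, (-1:ℝ)^i * (2*(j:ℝ) - 2*(i:ℝ) - 1) * (c i * c (2*j - 1 - i)) := by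
  rw [Finset.sum_range_succ']
  simp only [Nat.cast_zero, mul_zero, zero_mul, add_zero]
  have hg : ∀ i ∈ Finset.range (2*j),
      (-1:ℝ)^(i+1) * ((i+1:ℕ):ℝ) * (c (i+1-1) * c (2*j - (i+1)))
      = (-1:ℝ)^(i+1) * ((i:ℝ)+1) * (c i * c (2*j-1-i)) := by
    intro i hi
    have hij := Finset.mem_range.mp hi
    rw [show i+1-1 = i from rfl, show 2*j-(i+1) = 2*j-1-i by omega]
    push_cast
    ring
  rw [Finset.sum_congr rfl hg, show 2*j = j + j by ring, Finset.sum_range_add]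
  have hrefl : ∑ i ∈ Finset.range j,
        (-1:ℝ)^(j+i+1) * (((j+i:ℕ):ℝ)+1) * (c (j+i) * c (j+j-1-(j+i)))
      = ∑ i ∈ Finset.range j, (-1:ℝ)^i * (2*(j:ℝ) - (i:ℝ)) * (c (j+j-1-i) * c i) := by
    rw [← Finset.sum_range_reflect
      (fun i => (-1:ℝ)^(j+i+1) * (((j+i:ℕ):ℝ)+1) * (c (j+i) * c (j+j-1-(j+i)))) j]
    apply Finset.sum_congr rfl
    intro i hi
    have hij : i < j := Finset.mem_range.mp hi
    rw [show j+(j-1-i) = j+j-1-i by omega, show j+j-1-(j+j-1-i) = i by omega]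
    have hsign : ((-1:ℝ))^(j+j-1-i+1) = (-1)^i := by
      rw [show j+j-1-i+1 = i + 2*(j-i) by omega, pow_add, pow_mul]
      simp
    rw [hsign]
    have hcast : (((j+j-1-i : ℕ)):ℝ) = 2*(j:ℝ) - 1 - (i:ℝ) := by
      have h1 : (j+j-1-i : ℕ) = j+j - (1+i) := by omega
      rw [h1, Nat.cast_sub (by omega : 1+i ≤ j+j)]
      push_cast
      ring
    rw [hcast]
    ring
  rw [hrefl, ← Finset.sum_add_distrib]
  apply Finset.sum_congr rfl
  intro i hi
  ring

lemma perj {L : ℝ} (hL : 0 < L) {u : ℝ → ℝ} {N : ℕ}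
    (hu : ContDiffOn ℝ (N : ℕ∞) u (Set.Icc 0 L)) {j : ℕ} (hjN : 2*j+1 ≤ N) :
    ∫ x in (0:ℝ)..L, D L u (2*j+1) x * (x * u x)
      = (∑ i ∈ Finset.range j, (-1:ℝ)^i * (L * D L u i L * D L u (2*j-i) L))
        - (∑ i ∈ Finset.range j, ((i:ℝ)+1) * (-1:ℝ)^i *
            (D L u i L * D L u (2*j-1-i) L - D L u i 0 * D L u (2*j-1-i) 0))
        + (-1:ℝ)^j * ((L/2) * (D L u j L)^2)
        - (-1:ℝ)^j * ((2*(j:ℝ)+1)/2) * ∫ x in (0:ℝ)..L, (D L u j x)^2 := by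
  have hL' : (0:ℝ) ≤ L := hL.le
  have h0mem : (0:ℝ) ∈ Set.Icc (0:ℝ) L := ⟨le_refl _, hL'⟩
  have hLmem : L ∈ Set.Icc (0:ℝ) L := ⟨hL', le_refl _⟩
  simp only [D]
  have hxu : ContDiffOn ℝ (N : ℕ∞) (fun y => y * u y) (Set.Icc 0 L) := contDiff_xu hu
  set I : ℝ := ∫ x in (0:ℝ)..L, iteratedDerivWithin (2*j+1) u (Set.Icc 0 L) x * (x * u x) with hI
  set Q : ℝ := ∫ x in (0:ℝ)..L, (iteratedDerivWithin j u (Set.Icc 0 L) x)^2 with hQ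
  -- main chain of integration by parts
  have hchain := chain_ibp hL hxu hu (n := 2*j+1) hjN (2*j+1) le_rfl
  have hIeq : ∫ x in (0:ℝ)..L, (fun y => y * u y) x *
      iteratedDerivWithin (2*j+1) u (Set.Icc 0 L) x = I := by
    rw [hI]; apply intervalIntegral.integral_congr; intro x _; dsimp only; ring
  rw [hIeq] at hchain
  set J : ℝ := ∫ x in (0:ℝ)..L, iteratedDerivWithin (2*j) u (Set.Icc 0 L) x * u x with hJ
  have hrem : ∫ x in (0:ℝ)..L, iteratedDerivWithin (2*j+1) (fun y => y * u y) (Set.Icc 0 L) x *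
      iteratedDerivWithin (2*j+1 - (2*j+1)) u (Set.Icc 0 L) x = I + (2*(j:ℝ)+1) * J := by
    have hcongr : ∫ x in (0:ℝ)..L, iteratedDerivWithin (2*j+1) (fun y => y * u y) (Set.Icc 0 L) x *
        iteratedDerivWithin (2*j+1 - (2*j+1)) u (Set.Icc 0 L) x
        = ∫ x in (0:ℝ)..L, (iteratedDerivWithin (2*j+1) u (Set.Icc 0 L) x * (x * u x)
            + (2*(j:ℝ)+1) * (iteratedDerivWithin (2*j) u (Set.Icc 0 L) x * u x)) := by
      apply intervalIntegral.integral_congr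
      intro x hx
      rw [Set.uIcc_of_le hL'] at hx
      dsimp only
      rw [leibniz_xu hL hu (2*j+1) hjN x hx]
      rw [show 2*j+1 - (2*j+1) = 0 by omega, show 2*j+1-1 = 2*j from rfl]
      rw [iteratedDerivWithin_zero]
      push_cast
      ring
    rw [hcongr]
    have int1 : IntervalIntegrable
        (fun x => iteratedDerivWithin (2*j+1) u (Set.Icc 0 L) x * (x * u x))
        MeasureTheory.volume 0 L := by
      apply ContinuousOn.intervalIntegrable
      rw [Set.uIcc_of_le hL']
      exact (cont_DD hL hu hjN).mul (continuousOn_id.mul (hu.continuousOn))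
    have int2 : IntervalIntegrable
        (fun x => (2*(j:ℝ)+1) * (iteratedDerivWithin (2*j) u (Set.Icc 0 L) x * u x))
        MeasureTheory.volume 0 L := by
      apply ContinuousOn.intervalIntegrable
      rw [Set.uIcc_of_le hL']
      exact continuousOn_const.mul (((cont_DD hL hu (by omega)).mul hu.continuousOn))
    rw [intervalIntegral.integral_add int1 int2, intervalIntegral.integral_const_mul]
  rw [hrem] at hchain
  have hodd : ((-1:ℝ))^(2*j+1) = -1 := by
    rw [pow_succ, pow_mul]; simp
  rw [hodd] at hchain
  -- the J integral
  have hJchain := chain_ibp hL hu hu (n := 2*j) (by omega) j (by omega)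
  have hJeq : ∫ x in (0:ℝ)..L, u x * iteratedDerivWithin (2*j) u (Set.Icc 0 L) x = J := by
    rw [hJ]; apply intervalIntegral.integral_congr; intro x _; dsimp only; ring
  rw [hJeq] at hJchain
  have hQeq : ∫ x in (0:ℝ)..L, iteratedDerivWithin j u (Set.Icc 0 L) x *
      iteratedDerivWithin (2*j-j) u (Set.Icc 0 L) x = Q := by
    rw [hQ]; apply intervalIntegral.integral_congr; intro x _; dsimp only
    rw [show 2*j-j = j by omega]; ring
  rw [hQeq] at hJchain
  -- boundary sum B1
  have hB1 : ∑ i ∈ Finset.range (2*j+1), (-1:ℝ)^i *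
      (iteratedDerivWithin i (fun y => y * u y) (Set.Icc 0 L) L *
        iteratedDerivWithin (2*j+1-1-i) u (Set.Icc 0 L) L
       - iteratedDerivWithin i (fun y => y * u y) (Set.Icc 0 L) 0 *
        iteratedDerivWithin (2*j+1-1-i) u (Set.Icc 0 L) 0)
      = L * (∑ i ∈ Finset.range (2*j+1), (-1:ℝ)^i *
          (iteratedDerivWithin i u (Set.Icc 0 L) L * iteratedDerivWithin (2*j-i) u (Set.Icc 0 L) L))
        + (∑ i ∈ Finset.range (2*j+1), (-1:ℝ)^i * (i:ℝ) *
          (iteratedDerivWithin (i-1) u (Set.Icc 0 L) L *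
            iteratedDerivWithin (2*j-i) u (Set.Icc 0 L) L))
        - (∑ i ∈ Finset.range (2*j+1), (-1:ℝ)^i * (i:ℝ) *
          (iteratedDerivWithin (i-1) u (Set.Icc 0 L) 0 *
            iteratedDerivWithin (2*j-i) u (Set.Icc 0 L) 0)) := by
    rw [Finset.mul_sum, ← Finset.sum_add_distrib, ← Finset.sum_sub_distrib]
    apply Finset.sum_congr rfl
    intro i hi
    have hi' : i < 2*j+1 := Finset.mem_range.mp hi
    rw [leibniz_xu hL hu i (by omega) L hLmem, leibniz_xu hL hu i (by omega) 0 h0mem,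
      show 2*j+1-1-i = 2*j-i from rfl]
    ring
  rw [hB1] at hchain
  have hp1 := pair1 (fun t => iteratedDerivWithin t u (Set.Icc 0 L) L) j
  have hp2a := pair2 (fun t => iteratedDerivWithin t u (Set.Icc 0 L) L) j
  have hp2b := pair2 (fun t => iteratedDerivWithin t u (Set.Icc 0 L) 0) j
  beta_reduce at hp1 hp2a hp2b
  rw [hp1, hp2a, hp2b] at hchain
  -- combine coefficient sums
  have hcomb : (∑ i ∈ Finset.range j, (-1:ℝ)^i * (2*(j:ℝ) - 2*(i:ℝ) - 1) *
        (iteratedDerivWithin i u (Set.Icc 0 L) L * iteratedDerivWithin (2*j-1-i) u (Set.Icc 0 L) L))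
      - (∑ i ∈ Finset.range j, (-1:ℝ)^i * (2*(j:ℝ) - 2*(i:ℝ) - 1) *
        (iteratedDerivWithin i u (Set.Icc 0 L) 0 * iteratedDerivWithin (2*j-1-i) u (Set.Icc 0 L) 0))
      - (2*(j:ℝ)+1) * (∑ i ∈ Finset.range j, (-1:ℝ)^i *
        (iteratedDerivWithin i u (Set.Icc 0 L) L * iteratedDerivWithin (2*j-1-i) u (Set.Icc 0 L) L
         - iteratedDerivWithin i u (Set.Icc 0 L) 0 *
           iteratedDerivWithin (2*j-1-i) u (Set.Icc 0 L) 0))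
      = -2 * ∑ i ∈ Finset.range j, ((i:ℝ)+1) * (-1:ℝ)^i *
          (iteratedDerivWithin i u (Set.Icc 0 L) L * iteratedDerivWithin (2*j-1-i) u (Set.Icc 0 L) L
           - iteratedDerivWithin i u (Set.Icc 0 L) 0 *
             iteratedDerivWithin (2*j-1-i) u (Set.Icc 0 L) 0) := by
    rw [Finset.mul_sum, Finset.mul_sum, ← Finset.sum_sub_distrib, ← Finset.sum_sub_distrib]
    apply Finset.sum_congr rfl
    intro i hi
    ring
  have hP1 : (∑ i ∈ Finset.range j, (-1:ℝ)^i *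
        (L * iteratedDerivWithin i u (Set.Icc 0 L) L * iteratedDerivWithin (2*j-i) u (Set.Icc 0 L) L))
      = L * ∑ i ∈ Finset.range j, (-1:ℝ)^i *
          (iteratedDerivWithin i u (Set.Icc 0 L) L * iteratedDerivWithin (2*j-i) u (Set.Icc 0 L) L) := by
    rw [Finset.mul_sum]
    apply Finset.sum_congr rfl
    intro i hi
    ring
  rw [hP1]
  linear_combination hchain/2 - ((2*(j:ℝ)+1)/2) * hJchain + hcomb/2

lemma swap_sum (l : ℕ) (G : ℕ → ℕ → ℝ) :
    ∑ i ∈ Finset.range l, ∑ k ∈ Finset.Icc 1 (l - i), G i k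
      = ∑ j ∈ Finset.Icc 1 l, ∑ i ∈ Finset.range j, G i (j - i) := by
  rw [Finset.sum_sigma' (Finset.range l) (fun i => Finset.Icc 1 (l - i)) (fun i k => G i k),
    Finset.sum_sigma' (Finset.Icc 1 l) (fun j => Finset.range j) (fun j i => G i (j - i))]
  apply Finset.sum_nbij' (fun p => (⟨p.1 + p.2, p.1⟩ : Σ _ : ℕ, ℕ))
    (fun p => (⟨p.2, p.1 - p.2⟩ : Σ _ : ℕ, ℕ))
  · rintro ⟨i, k⟩ hp
    simp only [Finset.mem_sigma, Finset.mem_range, Finset.mem_Icc] at hp ⊢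
    omega
  · rintro ⟨j, i⟩ hp
    simp only [Finset.mem_sigma, Finset.mem_range, Finset.mem_Icc] at hp ⊢
    omega
  · rintro ⟨i, k⟩ hp
    simp only [Finset.mem_sigma, Finset.mem_range, Finset.mem_Icc] at hp
    dsimp only
    have h1 : i + k - i = k := by omega
    simp [h1]
  · rintro ⟨j, i⟩ hp
    simp only [Finset.mem_sigma, Finset.mem_range, Finset.mem_Icc] at hp
    dsimp only
    have h1 : i + (j - i) = j := by omega
    simp [h1]
  · rintro ⟨i, k⟩ hp
    simp only [Finset.mem_sigma, Finset.mem_range, Finset.mem_Icc] at hp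
    dsimp only
    have h1 : i + k - i = k := by omega
    rw [h1]

theorem stmt_3 (L : ℝ) (hL : 0 < L) (l : ℕ) (hl : 1 ≤ l) (u : ℝ → ℝ)
    (hu : ContDiffOn ℝ ((2 * l + 1 : ℕ) : ℕ∞) u (Set.Icc 0 L)) :
    ∑ j ∈ Finset.Icc 1 l, (-1 : ℝ) ^ (j + 1) *
        ∫ x in (0:ℝ)..L, D L u (2 * j + 1) x * (x * u x) =
      (∑ i ∈ Finset.range l,
        (L * D L u i L * (∑ k ∈ Finset.Icc 1 (l - i), (-1 : ℝ) ^ (k + 1) * D L u (2 * k + i) L) -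
         0 * D L u i 0 * (∑ k ∈ Finset.Icc 1 (l - i), (-1 : ℝ) ^ (k + 1) * D L u (2 * k + i) 0)))
      + (∑ i ∈ Finset.range l, (1 + (i : ℝ)) *
        (D L u i L * (∑ k ∈ Finset.Icc 1 (l - i), (-1 : ℝ) ^ k * D L u (2 * k + i - 1) L) -
         D L u i 0 * (∑ k ∈ Finset.Icc 1 (l - i), (-1 : ℝ) ^ k * D L u (2 * k + i - 1) 0)))
      - (∑ j ∈ Finset.Icc 1 l, ((L / 2) * (D L u j L) ^ 2 - (0 / 2) * (D L u j 0) ^ 2))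
      + ∑ j ∈ Finset.Icc 1 l, ((2 * (j : ℝ) + 1) / 2) *
          ∫ x in (0:ℝ)..L, (D L u j x) ^ 2 := by
  -- rewrite group 1 of the RHS as a double sum
  have hg1 : (∑ i ∈ Finset.range l,
        (L * D L u i L * (∑ k ∈ Finset.Icc 1 (l - i), (-1 : ℝ) ^ (k + 1) * D L u (2 * k + i) L) -
         0 * D L u i 0 * (∑ k ∈ Finset.Icc 1 (l - i), (-1 : ℝ) ^ (k + 1) * D L u (2 * k + i) 0)))
      = ∑ i ∈ Finset.range l, ∑ k ∈ Finset.Icc 1 (l - i),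
          (-1:ℝ)^(k+1) * (L * D L u i L * D L u (2*k+i) L) := by
    apply Finset.sum_congr rfl
    intro i _
    rw [zero_mul, zero_mul, sub_zero, Finset.mul_sum]
    apply Finset.sum_congr rfl
    intro k _
    ring
  have hg2 : (∑ i ∈ Finset.range l, (1 + (i : ℝ)) *
        (D L u i L * (∑ k ∈ Finset.Icc 1 (l - i), (-1 : ℝ) ^ k * D L u (2 * k + i - 1) L) -
         D L u i 0 * (∑ k ∈ Finset.Icc 1 (l - i), (-1 : ℝ) ^ k * D L u (2 * k + i - 1) 0)))
      = ∑ i ∈ Finset.range l, ∑ k ∈ Finset.Icc 1 (l - i),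
          (1 + (i:ℝ)) * (-1:ℝ)^k *
            (D L u i L * D L u (2*k+i-1) L - D L u i 0 * D L u (2*k+i-1) 0) := by
    apply Finset.sum_congr rfl
    intro i _
    rw [Finset.mul_sum, Finset.mul_sum, ← Finset.sum_sub_distrib, Finset.mul_sum]
    apply Finset.sum_congr rfl
    intro k _
    ring
  rw [hg1, hg2,
    swap_sum l (fun i k => (-1:ℝ)^(k+1) * (L * D L u i L * D L u (2*k+i) L)),
    swap_sum l (fun i k => (1 + (i:ℝ)) * (-1:ℝ)^k *
      (D L u i L * D L u (2*k+i-1) L - D L u i 0 * D L u (2*k+i-1) 0))]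
  -- rewrite LHS via the per-j identity
  have hLHS : ∀ j ∈ Finset.Icc 1 l,
      (-1 : ℝ) ^ (j + 1) * ∫ x in (0:ℝ)..L, D L u (2 * j + 1) x * (x * u x)
      = (-1 : ℝ) ^ (j + 1) *
        ((∑ i ∈ Finset.range j, (-1:ℝ)^i * (L * D L u i L * D L u (2*j-i) L))
          - (∑ i ∈ Finset.range j, ((i:ℝ)+1) * (-1:ℝ)^i *
              (D L u i L * D L u (2*j-1-i) L - D L u i 0 * D L u (2*j-1-i) 0))
          + (-1:ℝ)^j * ((L/2) * (D L u j L)^2)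
          - (-1:ℝ)^j * ((2*(j:ℝ)+1)/2) * ∫ x in (0:ℝ)..L, (D L u j x)^2) := by
    intro j hj
    have hj' := Finset.mem_Icc.mp hj
    rw [perj hL hu (j := j) (by omega)]
  rw [Finset.sum_congr rfl hLHS]
  rw [← Finset.sum_add_distrib, ← Finset.sum_sub_distrib, ← Finset.sum_add_distrib]
  apply Finset.sum_congr rfl
  intro j hj
  have hj' := Finset.mem_Icc.mp hj
  have e1 : ∑ i ∈ Finset.range j, (-1:ℝ)^(j-i+1) * (L * D L u i L * D L u (2*(j-i)+i) L)
      = (-1:ℝ)^(j+1) * ∑ i ∈ Finset.range j, (-1:ℝ)^i * (L * D L u i L * D L u (2*j-i) L) := by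
    rw [Finset.mul_sum]
    apply Finset.sum_congr rfl
    intro i hi
    have hij : i < j := Finset.mem_range.mp hi
    have hidx : 2*(j-i)+i = 2*j-i := by omega
    have hsgn : ((-1:ℝ))^(j+1) * (-1)^i = (-1)^(j-i+1) := by
      rw [← pow_add, show j+1+i = (j-i+1)+2*i by omega, pow_add, pow_mul]
      simp
    rw [hidx, ← hsgn]
    ring
  have e2 : ∑ i ∈ Finset.range j, (1 + (i:ℝ)) * (-1:ℝ)^(j-i) *
        (D L u i L * D L u (2*(j-i)+i-1) L - D L u i 0 * D L u (2*(j-i)+i-1) 0)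
      = (-1:ℝ)^j * ∑ i ∈ Finset.range j, ((i:ℝ)+1) * (-1:ℝ)^i *
          (D L u i L * D L u (2*j-1-i) L - D L u i 0 * D L u (2*j-1-i) 0) := by
    rw [Finset.mul_sum]
    apply Finset.sum_congr rfl
    intro i hi
    have hij : i < j := Finset.mem_range.mp hi
    have hidx : 2*(j-i)+i-1 = 2*j-1-i := by omega
    have hsgn : ((-1:ℝ))^j * (-1)^i = (-1)^(j-i) := by
      rw [← pow_add, show j+i = (j-i)+2*i by omega, pow_add, pow_mul]
      simp
    rw [hidx, ← hsgn]
    ring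
  have h2 : ((-1:ℝ))^j * (-1)^j = 1 := by
    rw [← pow_add, show j+j = 2*j by omega, pow_mul]
    simp
  rw [e1, e2]
  linear_combination (((2*(j:ℝ)+1)/2) * (∫ x in (0:ℝ)..L, (D L u j x)^2)
    - (L/2) * (D L u j L)^2) * h2
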